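/- If all roots of a nonconstant polynomial p lie in the closed disk {z : |z - a| ≤ r}, then all roots of p' lie in the same closed disk. -/

import Mathlib

open Polynomial

private lemma sum_map_sub' {ι : Type*} (s : Multiset ι) (f g : ι → ℂ) :
    (s.map fun x => f x - g x).sum = (s.map f).sum - (s.map g).sum := by
  induction s using Multiset.induction_on with
  | empty => simp
  | cons a s ih => simp [ih]; ring

theorem stmt_2 (p : ℂ[X]) (hdeg : 1 ≤ p.degree) (a : ℂ) (r : ℝ) (hr : 0 ≤ r)
    (h : ∀ z : ℂ, p.IsRoot z → ‖z - a‖ ≤ r) :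
    ∀ ζ : ℂ, p.derivative.IsRoot ζ → ‖ζ - a‖ ≤ r := by
  classical
  intro ζ hζ
  by_cases hpζ : p.IsRoot ζ
  · exact h ζ hpζ
  have hp : p ≠ 0 := fun h0 => by simp [h0] at hdeg
  have hcard : p.roots.card = p.natDegree :=
    (Polynomial.splits_iff_card_roots).mp (IsAlgClosed.splits p)
  set t := p.roots with ht
  have hfact : C p.leadingCoeff * (t.map fun z => X - C z).prod = p :=
    Polynomial.C_leadingCoeff_mul_prod_multiset_X_sub_C hcard
  have hlc : p.leadingCoeff ≠ 0 := Polynomial.leadingCoeff_ne_zero.mpr hp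
  have hne : ∀ z ∈ t, ζ - z ≠ 0 := by
    intro z hz hzz
    exact hpζ (sub_eq_zero.mp hzz ▸ Polynomial.isRoot_of_mem_roots hz)
  have hMval : Polynomial.eval ζ (t.map fun z => X - C z).prod ≠ 0 := by
    rw [Polynomial.eval_multiset_prod]
    refine Multiset.prod_ne_zero ?_
    simp only [Multiset.map_map, Multiset.mem_map]
    rintro ⟨z, hz, hz0⟩
    exact hne z hz (by simpa using hz0)
  -- derivative of p evaluated at ζ is 0
  have hder0 : Polynomial.eval ζ (derivative (t.map fun z => X - C z).prod) = 0 := by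
    have hd : Polynomial.eval ζ (derivative p) = 0 := hζ
    rw [← hfact, derivative_mul, derivative_C, zero_mul, zero_add, Polynomial.eval_mul,
      Polynomial.eval_C] at hd
    exact (mul_eq_zero.mp hd).resolve_left hlc
  -- the logarithmic derivative sum vanishes
  have hS : (t.map fun z => (ζ - z)⁻¹).sum = 0 := by
    rw [Polynomial.derivative_prod] at hder0
    have hev : Polynomial.eval ζ
        (t.map fun z => ((t.erase z).map fun w => X - C w).prod * derivative (X - C z)).sum
        = (t.map fun z =>
            Polynomial.eval ζ (t.map fun w => X - C w).prod * (ζ - z)⁻¹).sum := by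
      have hms := map_multiset_sum (Polynomial.evalRingHom ζ)
        (t.map fun z => ((t.erase z).map fun w => X - C w).prod * derivative (X - C z))
      simp only [coe_evalRingHom] at hms
      rw [hms, Multiset.map_map]
      congr 1
      refine Multiset.map_congr rfl fun z hz => ?_
      simp only [Function.comp_apply, coe_evalRingHom, derivative_X_sub_C, mul_one]
      have hsplit : (t.map fun w => X - C w).prod
          = (X - C z) * ((t.erase z).map fun w => X - C w).prod := by
        conv_lhs => rw [← Multiset.cons_erase hz]
        rw [Multiset.map_cons, Multiset.prod_cons]
      rw [hsplit, Polynomial.eval_mul, Polynomial.eval_sub, Polynomial.eval_X,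
        Polynomial.eval_C]
      field_simp [hne z hz]
    rw [hev, Multiset.sum_map_mul_left] at hder0
    exact (mul_eq_zero.mp hder0).resolve_left hMval
  -- conjugate: sum of w_z * (ζ - z) = 0 with w_z = (normSq (ζ-z))⁻¹
  have hT : (t.map fun z => ((Complex.normSq (ζ - z))⁻¹ : ℂ) * (ζ - z)).sum = 0 := by
    have hc := congrArg (starRingEnd ℂ) hS
    rw [map_multiset_sum (starRingEnd ℂ), Multiset.map_map, map_zero] at hc
    rw [← hc]
    congr 1
    refine Multiset.map_congr rfl fun z hz => ?_
    have h2 : Complex.normSq (ζ - z) ≠ 0 := (Complex.normSq_pos.mpr (hne z hz)).ne'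
    rw [Function.comp_apply, map_inv₀]
    refine eq_inv_of_mul_eq_one_right ?_
    rw [mul_left_comm, mul_comm ((starRingEnd ℂ) (ζ - z)), Complex.mul_conj,
      inv_mul_cancel₀ (Complex.ofReal_ne_zero.mpr h2)]
  -- rearrange: (ζ - a) * W = sum of w_z * (z - a)
  set W : ℝ := (t.map fun z => (Complex.normSq (ζ - z))⁻¹).sum with hW
  have hWpos : 0 < W := by
    have htne : t ≠ 0 := by
      intro h0
      have hnd : p.natDegree = 0 := by rw [← hcard, h0]; simp
      have hle := Polynomial.degree_le_natDegree (p := p)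
      rw [hnd] at hle
      exact absurd (le_trans hdeg hle) (by norm_num)
    obtain ⟨z, hz⟩ := Multiset.exists_mem_of_ne_zero htne
    have h0 : (0 : ℝ) = (t.map fun _ => (0 : ℝ)).sum := by simp
    rw [hW, h0]
    refine Multiset.sum_lt_sum (fun i hi => ?_) ⟨z, hz, ?_⟩
    · exact inv_nonneg.mpr (Complex.normSq_nonneg _)
    · exact inv_pos.mpr (Complex.normSq_pos.mpr (hne z hz))
  have hkey : (ζ - a) * (W : ℂ)
      = (t.map fun z => ((Complex.normSq (ζ - z))⁻¹ : ℂ) * (z - a)).sum := by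
    have expand : ∀ z ∈ t, ((Complex.normSq (ζ - z))⁻¹ : ℂ) * (ζ - z) =
        ((Complex.normSq (ζ - z))⁻¹ : ℂ) * (ζ - a)
          - ((Complex.normSq (ζ - z))⁻¹ : ℂ) * (z - a) := by
      intro z hz; ring
    rw [Multiset.map_congr rfl expand, sum_map_sub'] at hT
    have hWc : (t.map fun z => ((Complex.normSq (ζ - z))⁻¹ : ℂ) * (ζ - a)).sum
        = (ζ - a) * (W : ℂ) := by
      have hcast : ((W : ℝ) : ℂ)
          = (t.map fun z => ((Complex.normSq (ζ - z))⁻¹ : ℂ)).sum := by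
        rw [hW, show ((Multiset.map (fun z => (Complex.normSq (ζ - z))⁻¹) t).sum : ℂ)
            = Complex.ofRealHom (Multiset.map (fun z => (Complex.normSq (ζ - z))⁻¹) t).sum
            from rfl, map_multiset_sum, Multiset.map_map]
        congr 1
        refine Multiset.map_congr rfl fun z hz => ?_
        simp
      rw [Multiset.sum_map_mul_right, hcast, mul_comm]
    rw [hWc] at hT
    linear_combination hT
  -- now take norms
  have hnorm : ‖ζ - a‖ * W ≤ r * W := by
    have h1 : ‖(ζ - a) * (W : ℂ)‖ ≤
        (t.map fun z => (Complex.normSq (ζ - z))⁻¹ * r).sum := by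
      rw [hkey]
      calc ‖(t.map fun z => ((Complex.normSq (ζ - z))⁻¹ : ℂ) * (z - a)).sum‖
          ≤ ((t.map fun z => ((Complex.normSq (ζ - z))⁻¹ : ℂ) * (z - a)).map
              (‖·‖)).sum := by
            simpa using norm_multiset_sum_le
              (t.map fun z => ((Complex.normSq (ζ - z))⁻¹ : ℂ) * (z - a))
        _ = (t.map fun z => (Complex.normSq (ζ - z))⁻¹ * ‖z - a‖).sum := by
            rw [Multiset.map_map]
            refine congrArg _ (Multiset.map_congr rfl fun z hz => ?_)
            simp only [Function.comp_apply, norm_mul]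
            congr 1
            rw [norm_inv, Complex.norm_real, Real.norm_eq_abs, abs_of_nonneg (Complex.normSq_nonneg _)]
        _ ≤ (t.map fun z => (Complex.normSq (ζ - z))⁻¹ * r).sum := by
            refine Multiset.sum_map_le_sum_map _ _ fun z hz => ?_
            exact mul_le_mul_of_nonneg_left (h z (Polynomial.isRoot_of_mem_roots hz))
              (inv_nonneg.mpr (Complex.normSq_nonneg _))
    have h2 : ‖(ζ - a) * (W : ℂ)‖ = ‖ζ - a‖ * W := by
      rw [norm_mul, Complex.norm_real, Real.norm_eq_abs, abs_of_pos hWpos]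
    have h3 : (t.map fun z => (Complex.normSq (ζ - z))⁻¹ * r).sum = r * W := by
      rw [Multiset.sum_map_mul_right, hW, mul_comm]
    rw [h2, h3] at h1
    exact h1
  exact le_of_mul_le_mul_right hnorm hWpos
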